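/- Let E be a real inner product space, let r_t : E → ℝ (for integers t, with r_s ≡ 0 for s ≤ 0) be differentiable functions with ‖∇r_t(θ)‖ ≤ M for all θ ∈ E and all t, where M > 0. Let b ≥ 2, w ≥ 1, T ≥ 1 be integers, δ ≥ 0, c > 0, and set η = c·√(log b / (T·M⁴)). For a ∈ S_b define the linear gradient generator m(θ; a, t) = Σ_{i=1}^b a_i ∇r_{t−i}(θ) and its smoothed version m̄(θ; a, t) = (1/w)·(m(θ; a, t) + Σ_{i=1}^{w-1} ∇r_{t-i}(θ)), and define u_{w,t}(θ) = (1/w)·Σ_{i=0}^{w-1} r_{t-i}(θ). Suppose the mixture weights φ_1,…,φ_T are produced by exponentiated gradient: φ_1 = (1/b,…,1/b) and φ_{t+1,i} = φ_{t,i}·exp(−η (∇h_t(φ_t))_i)/(Σ_j φ_{t,j}·exp(−η (∇h_t(φ_t))_j)), where h_t(a) = ‖Σ_{j=1}^b a_j (∇r_t(θ_t) − ∇r_{t−j}(θ_t))‖², and suppose the iterates θ_1,…,θ_T ∈ E satisfy the termination condition ‖m̄(θ_t; φ_t, t)‖ ≤ δ for all t ∈ {1,…,T}. Furthermore suppose for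 some φ* ∈ S_b and reals Q_1,…,Q_T ≥ 0 one has ‖∇r_t(θ) − m(θ; φ*, t)‖² ≤ Q_t for all θ ∈ E and t ∈ {1,…,T}. Then the average w-local regret satisfies (1/T)·Σ_{t=1}^T ‖∇u_{w,t}(θ_t)‖² ≤ 2δ² + (2/(w²T))·(Σ_{t=1}^T Q_t + (1/c + 32c)·M²·√(T·log b)). -/

import Mathlib

open Real

theorem fgd_hoeffding_core (q : ℝ) (hq0 : 0 ≤ q) (hq1 : q ≤ 1) (y : ℝ) :
    q * Real.exp (2 * (1 - q) * y) + (1 - q) * Real.exp (-(2 * q * y))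
      ≤ Real.exp (y ^ 2 / 2) := by
  set A : ℝ → ℝ := fun z => q * Real.exp (2 * (1 - q) * z) with hA
  set B : ℝ → ℝ := fun z => (1 - q) * Real.exp (-(2 * q * z)) with hB
  set F : ℝ → ℝ := fun z => A z + B z with hF
  have hApos : ∀ z, 0 ≤ A z := fun z => mul_nonneg hq0 (Real.exp_pos _).le
  have hBpos : ∀ z, 0 ≤ B z := fun z => mul_nonneg (by linarith) (Real.exp_pos _).le
  have hFpos : ∀ z, 0 < F z := by
    intro z
    rcases lt_or_eq_of_le hq1 with h | h
    · have : 0 < B z := mul_pos (by linarith) (Real.exp_pos _)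
      have := hApos z; simp only [hF]; linarith
    · have : 0 < A z := by
        simp only [hA, h]; positivity
      have := hBpos z; simp only [hF]; linarith
  have hA' : ∀ z, HasDerivAt A (2 * (1 - q) * A z) z := by
    intro z
    have : HasDerivAt (fun z : ℝ => 2 * (1 - q) * z) (2 * (1 - q)) z := by
      simpa using (hasDerivAt_id z).const_mul (2 * (1 - q))
    have := (this.exp).const_mul q
    simpa [hA, mul_comm, mul_left_comm, mul_assoc] using this
  have hB' : ∀ z, HasDerivAt B (-(2 * q) * B z) z := by
    intro z
    have : HasDerivAt (fun z : ℝ => -(2 * q * z)) (-(2 * q)) z := by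
      simpa using ((hasDerivAt_id z).const_mul (2 * q)).fun_neg
    have := (this.exp).const_mul (1 - q)
    simpa [hB, mul_comm, mul_left_comm, mul_assoc] using this
  have hF' : ∀ z, HasDerivAt F (2 * (1 - q) * A z + -(2 * q) * B z) z :=
    fun z => (hA' z).add (hB' z)
  -- φ = y - F'/F
  set φ : ℝ → ℝ := fun z => z - (2 * (1 - q) * A z + -(2 * q) * B z) / F z with hφ
  have hφ' : ∀ z, HasDerivAt φ (1 - 4 * A z * B z / (F z) ^ 2) z := by
    intro z
    have hnum : HasDerivAt (fun w => 2 * (1 - q) * A w + -(2 * q) * B w)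
        (2 * (1 - q) * (2 * (1 - q) * A z) + -(2 * q) * (-(2 * q) * B z)) z :=
      ((hA' z).const_mul _).add ((hB' z).const_mul _)
    have hq' : HasDerivAt (fun w => (2 * (1 - q) * A w + -(2 * q) * B w) / F w)
        (((2 * (1 - q) * (2 * (1 - q) * A z) + -(2 * q) * (-(2 * q) * B z)) * F z
          - (2 * (1 - q) * A z + -(2 * q) * B z) * (2 * (1 - q) * A z + -(2 * q) * B z))
            / (F z) ^ 2) z := hnum.div (hF' z) (hFpos z).ne'
    have : HasDerivAt φ _ z := (hasDerivAt_id z).fun_sub hq'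
    convert this using 1
    have hFz := (hFpos z).ne'
    field_simp [hF]
    ring
  have hφmono : Monotone φ := by
    apply monotone_of_deriv_nonneg
    · exact fun z => (hφ' z).differentiableAt
    · intro z
      rw [(hφ' z).deriv]
      have hFz : F z = A z + B z := rfl
      have h4 : 4 * A z * B z ≤ (F z) ^ 2 := by
        have := hApos z; have := hBpos z
        rw [hFz]; nlinarith [sq_nonneg (A z - B z)]
      have := sq_nonneg (F z)
      have hFz2 : (0:ℝ) < (F z)^2 := pow_pos (hFpos z) 2
      have : 4 * A z * B z / (F z) ^ 2 ≤ 1 := by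
        rw [div_le_one hFz2]; exact h4
      linarith
  have hφ0 : φ 0 = 0 := by
    have hnum : 2 * (1 - q) * A 0 + -(2 * q) * B 0 = 0 := by
      simp only [hA, hB]
      norm_num
      ring
    simp only [hφ, hnum, zero_div, sub_zero]
  -- ψ = y²/2 - log F
  set ψ : ℝ → ℝ := fun z => z ^ 2 / 2 - Real.log (F z) with hψ
  have hψ' : ∀ z, HasDerivAt ψ (φ z) z := by
    intro z
    have hlog : HasDerivAt (fun w => Real.log (F w))
        ((2 * (1 - q) * A z + -(2 * q) * B z) / F z) z := (hF' z).log (hFpos z).ne'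
    have hsq : HasDerivAt (fun w : ℝ => w ^ 2 / 2) z z := by
      have := (hasDerivAt_pow 2 z).div_const 2
      simpa using this
    simpa [hψ, hφ] using hsq.fun_sub hlog
  have hψ0 : ψ 0 = 0 := by
    have : F 0 = 1 := by simp [hF, hA, hB]
    simp [hψ, this]
  have hψnonneg : ∀ z, 0 ≤ ψ z := by
    intro z
    rcases le_total 0 z with hz | hz
    · have hm : MonotoneOn ψ (Set.Ici (0:ℝ)) := by
        apply monotoneOn_of_deriv_nonneg (convex_Ici 0)
        · exact fun w _ => ((hψ' w).differentiableAt.continuousAt.continuousWithinAt)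
        · exact fun w _ => (hψ' w).differentiableAt.differentiableWithinAt
        · intro w hw
          rw [(hψ' w).deriv]
          rw [interior_Ici] at hw
          have := hφmono (le_of_lt hw)
          rwa [hφ0] at this
      have := hm (Set.self_mem_Ici) (Set.mem_Ici.mpr hz) hz
      rwa [hψ0] at this
    · have hm : AntitoneOn ψ (Set.Iic (0:ℝ)) := by
        apply antitoneOn_of_deriv_nonpos (convex_Iic 0)
        · exact fun w _ => ((hψ' w).differentiableAt.continuousAt.continuousWithinAt)
        · exact fun w _ => (hψ' w).differentiableAt.differentiableWithinAt
        · intro w hw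
          rw [(hψ' w).deriv]
          rw [interior_Iic] at hw
          have := hφmono (le_of_lt hw)
          rwa [hφ0] at this
      have := hm (Set.mem_Iic.mpr hz) (Set.self_mem_Iic) hz
      rwa [hψ0] at this
  have := hψnonneg y
  have hlog : Real.log (F y) ≤ y ^ 2 / 2 := by simp only [hψ] at this; linarith
  have := (Real.log_le_iff_le_exp (hFpos y)).mp hlog
  simpa [hF, hA, hB] using this

theorem fgd_hoeffding_finite {ι : Type*} [Fintype ι] (p ℓ : ι → ℝ) (hp0 : ∀ i, 0 ≤ p i)
    (hp1 : ∑ i, p i = 1) (G : ℝ) (hG : 0 < G) (hℓ : ∀ i, |ℓ i| ≤ G) (s : ℝ) :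
    ∑ i, p i * Real.exp (s * ℓ i)
      ≤ Real.exp (s * (∑ i, p i * ℓ i) + s ^ 2 * G ^ 2 / 2) := by
  set m := ∑ i, p i * ℓ i with hmdef
  have hm : |m| ≤ G := by
    calc |m| ≤ ∑ i, |p i * ℓ i| := Finset.abs_sum_le_sum_abs _ _
    _ ≤ ∑ i, p i * G := by
        apply Finset.sum_le_sum; intro i _
        rw [abs_mul, abs_of_nonneg (hp0 i)]
        exact mul_le_mul_of_nonneg_left (hℓ i) (hp0 i)
    _ = G := by rw [← Finset.sum_mul, hp1, one_mul]
  have hm1 := (abs_le.mp hm).1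
  have hm2 := (abs_le.mp hm).2
  have point : ∀ i, Real.exp (s * ℓ i)
      ≤ (G - ℓ i)/(2*G) * Real.exp (s * (-G)) + (G + ℓ i)/(2*G) * Real.exp (s * G) := by
    intro i
    have hl1 := (abs_le.mp (hℓ i)).1
    have hl2 := (abs_le.mp (hℓ i)).2
    have h1 : (0:ℝ) ≤ (G - ℓ i)/(2*G) := div_nonneg (by linarith) (by linarith)
    have h2 : (0:ℝ) ≤ (G + ℓ i)/(2*G) := div_nonneg (by linarith) (by linarith)
    have h3 : (G - ℓ i)/(2*G) + (G + ℓ i)/(2*G) = 1 := by field_simp; ring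
    have hcvx := convexOn_exp.2 (Set.mem_univ (s * (-G))) (Set.mem_univ (s*G)) h1 h2 h3
    simp only [smul_eq_mul] at hcvx
    have hexp : (G - ℓ i)/(2*G) * (s * (-G)) + (G + ℓ i)/(2*G) * (s*G) = s * ℓ i := by
      field_simp; ring
    rwa [hexp] at hcvx
  have sum_bound : ∑ i, p i * Real.exp (s * ℓ i)
      ≤ (G - m)/(2*G) * Real.exp (s * (-G)) + (G + m)/(2*G) * Real.exp (s * G) := by
    calc ∑ i, p i * Real.exp (s * ℓ i)
        ≤ ∑ i, p i * ((G - ℓ i)/(2*G) * Real.exp (s * (-G))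
            + (G + ℓ i)/(2*G) * Real.exp (s * G)) := by
          apply Finset.sum_le_sum; intro i _
          exact mul_le_mul_of_nonneg_left (point i) (hp0 i)
      _ = (∑ i, p i * ((G - ℓ i)/(2*G))) * Real.exp (s * (-G))
            + (∑ i, p i * ((G + ℓ i)/(2*G))) * Real.exp (s * G) := by
          rw [Finset.sum_mul, Finset.sum_mul, ← Finset.sum_add_distrib]
          apply Finset.sum_congr rfl; intro i _; ring
      _ = (G - m)/(2*G) * Real.exp (s * (-G)) + (G + m)/(2*G) * Real.exp (s * G) := by
          have e1 : ∑ i, p i * ((G - ℓ i)/(2*G)) = (G - m)/(2*G) := by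
            rw [hmdef, eq_div_iff (by positivity : (2:ℝ)*G ≠ 0), Finset.sum_mul]
            have : ∀ i ∈ (Finset.univ : Finset ι),
                p i * ((G - ℓ i)/(2*G)) * (2*G) = p i * G - p i * ℓ i := by
              intro i _; field_simp
            rw [Finset.sum_congr rfl this, Finset.sum_sub_distrib, ← Finset.sum_mul, hp1]
            ring
          have e2 : ∑ i, p i * ((G + ℓ i)/(2*G)) = (G + m)/(2*G) := by
            rw [hmdef, eq_div_iff (by positivity : (2:ℝ)*G ≠ 0), Finset.sum_mul]
            have : ∀ i ∈ (Finset.univ : Finset ι),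
                p i * ((G + ℓ i)/(2*G)) * (2*G) = p i * G + p i * ℓ i := by
              intro i _; field_simp
            rw [Finset.sum_congr rfl this, Finset.sum_add_distrib, ← Finset.sum_mul, hp1]
            ring
          rw [e1, e2]
  refine sum_bound.trans ?_
  set q := (G + m)/(2*G) with hq
  have hq0' : 0 ≤ q := div_nonneg (by linarith) (by linarith)
  have hq1' : q ≤ 1 := by rw [hq, div_le_one (by linarith)]; linarith
  have key := fgd_hoeffding_core q hq0' hq1' (s*G)
  have h1q : 1 - q = (G - m)/(2*G) := by rw [hq]; field_simp; ring
  have e1 : 2 * (1 - q) * (s*G) = (s*G - s*m) := by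
    rw [h1q]; field_simp
  have e2 : -(2 * q * (s*G)) = (-(s*G) - s*m) := by
    rw [hq]; field_simp; ring
  rw [e1, e2, h1q, hq] at key
  have key' := mul_le_mul_of_nonneg_right key (Real.exp_pos (s*m)).le
  calc (G - m)/(2*G) * Real.exp (s * (-G)) + (G + m)/(2*G) * Real.exp (s * G)
      = ((G + m)/(2*G) * Real.exp (s*G - s*m) + (G - m)/(2*G) * Real.exp (-(s*G) - s*m))
          * Real.exp (s*m) := by
        rw [add_mul, mul_assoc, mul_assoc, ← Real.exp_add, ← Real.exp_add]
        ring_nf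
    _ ≤ Real.exp ((s*G)^2/2) * Real.exp (s*m) := key'
    _ = Real.exp (s * m + s^2 * G^2/2) := by
        rw [← Real.exp_add]; ring_nf

theorem fgd_hedge {b : ℕ} (hb : 2 ≤ b) (T : ℕ) (φ : ℕ → Fin b → ℝ) (ℓ : ℕ → Fin b → ℝ)
    (hsimp : ∀ t ∈ Finset.Icc 1 (T+1), (∀ i, 0 < φ t i) ∧ ∑ i, φ t i = 1)
    (G : ℝ) (hG : 0 < G) (hℓ : ∀ t ∈ Finset.Icc 1 T, ∀ i, |ℓ t i| ≤ G)
    (η : ℝ) (hη : 0 < η)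
    (hinit : ∀ i, φ 1 i = 1 / (b:ℝ))
    (hstep : ∀ t ∈ Finset.Icc 1 T, ∀ i : Fin b,
      φ (t+1) i = φ t i * Real.exp (-η * ℓ t i) / ∑ j, φ t j * Real.exp (-η * ℓ t j))
    (p : Fin b → ℝ) (hp0 : ∀ i, 0 ≤ p i) (hp1 : ∑ i, p i = 1) :
    ∑ t ∈ Finset.Icc 1 T, ((∑ i, φ t i * ℓ t i) - ∑ i, p i * ℓ t i)
      ≤ Real.log b / η + T * (η * G^2 / 2) := by
  have hbpos : (0:ℝ) < b := by
    have : (0:ℕ) < b := lt_of_lt_of_le Nat.zero_lt_two hb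
    exact_mod_cast this
  haveI : NeZero b := ⟨by omega⟩
  set Z : ℕ → ℝ := fun t => ∑ j, φ t j * Real.exp (-η * ℓ t j) with hZ
  have hZpos : ∀ t ∈ Finset.Icc 1 T, 0 < Z t := by
    intro t ht
    have ht' : t ∈ Finset.Icc 1 (T+1) := by
      simp only [Finset.mem_Icc] at ht ⊢; omega
    have hpos := (hsimp t ht').1
    apply Finset.sum_pos
    · intro j _
      exact mul_pos (hpos j) (Real.exp_pos _)
    · exact Finset.univ_nonempty
  -- telescoping identity
  have claim1 : ∀ n, n ≤ T → ∀ i,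
      φ (n+1) i * ∏ t ∈ Finset.Icc 1 n, Z t
        = (1/(b:ℝ)) * Real.exp (-η * ∑ t ∈ Finset.Icc 1 n, ℓ t i) := by
    intro n
    induction n with
    | zero =>
      intro _ i
      simp [hinit i]
    | succ n ih =>
      intro hn i
      have hn' : n ≤ T := by omega
      have hmem : n + 1 ∈ Finset.Icc 1 T := by
        simp only [Finset.mem_Icc]; omega
      have hZne : Z (n+1) ≠ 0 := (hZpos _ hmem).ne'
      rw [Finset.prod_Icc_succ_top (by omega : 1 ≤ n + 1),
          Finset.sum_Icc_succ_top (by omega : 1 ≤ n + 1)]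
      have hstep' := hstep (n+1) hmem i
      have hZn : ∑ j, φ (n+1) j * Real.exp (-η * ℓ (n+1) j) = Z (n+1) := rfl
      rw [hstep', hZn]
      have hre : φ (n+1) i * Real.exp (-η * ℓ (n+1) i) / Z (n+1)
            * ((∏ t ∈ Finset.Icc 1 n, Z t) * Z (n+1))
          = (φ (n+1) i * ∏ t ∈ Finset.Icc 1 n, Z t) * Real.exp (-η * ℓ (n+1) i) := by
        field_simp
      rw [hre, ih hn' i, mul_assoc, ← Real.exp_add]
      congr 1
      ring
  -- per-step Hoeffding bound on log Z t
  have claim3 : ∀ t ∈ Finset.Icc 1 T,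
      Real.log (Z t) ≤ -η * (∑ i, φ t i * ℓ t i) + η^2 * G^2 / 2 := by
    intro t ht
    have ht' : t ∈ Finset.Icc 1 (T+1) := by
      simp only [Finset.mem_Icc] at ht ⊢; omega
    obtain ⟨hpos, hsum⟩ := hsimp t ht'
    have := fgd_hoeffding_finite (φ t) (ℓ t) (fun i => (hpos i).le) hsum G hG
      (hℓ t ht) (-η)
    have hb2 : Z t ≤ Real.exp (-η * (∑ i, φ t i * ℓ t i) + η^2 * G^2 / 2) := by
      refine this.trans (le_of_eq ?_)
      congr 1
      ring
    calc Real.log (Z t) ≤ Real.log (Real.exp (-η * (∑ i, φ t i * ℓ t i) + η^2 * G^2 / 2)) :=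
          Real.log_le_log (hZpos t ht) hb2
      _ = _ := Real.log_exp _
  -- lower bound on ∑ log Z t via the comparator
  have hT1 : T + 1 ∈ Finset.Icc 1 (T+1) := by simp
  obtain ⟨hposT, hsumT⟩ := hsimp (T+1) hT1
  have hφT1le : ∀ i, φ (T+1) i ≤ 1 := by
    intro i
    calc φ (T+1) i ≤ ∑ j, φ (T+1) j :=
          Finset.single_le_sum (fun j _ => (hposT j).le) (Finset.mem_univ i)
      _ = 1 := hsumT
  have hlogprod : Real.log (∏ t ∈ Finset.Icc 1 T, Z t) = ∑ t ∈ Finset.Icc 1 T, Real.log (Z t) :=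
    Real.log_prod (fun t ht => (hZpos t ht).ne')
  have claim4 : ∀ i, -Real.log b - η * ∑ t ∈ Finset.Icc 1 T, ℓ t i
      ≤ ∑ t ∈ Finset.Icc 1 T, Real.log (Z t) := by
    intro i
    have hkey := claim1 T le_rfl i
    have hprodpos : 0 < ∏ t ∈ Finset.Icc 1 T, Z t :=
      Finset.prod_pos (fun t ht => hZpos t ht)
    have hge : (1/(b:ℝ)) * Real.exp (-η * ∑ t ∈ Finset.Icc 1 T, ℓ t i)
        ≤ ∏ t ∈ Finset.Icc 1 T, Z t := by
      rw [← hkey]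
      have := hφT1le i
      nlinarith [hprodpos]
    have hlhspos : (0:ℝ) < (1/(b:ℝ)) * Real.exp (-η * ∑ t ∈ Finset.Icc 1 T, ℓ t i) := by
      positivity
    have := Real.log_le_log hlhspos hge
    rw [hlogprod] at this
    refine le_trans (le_of_eq ?_) this
    rw [Real.log_mul (by positivity) (Real.exp_pos _).ne', Real.log_exp,
        one_div, Real.log_inv]
    ring
  -- weighted averaging over the comparator
  have hcomb : -Real.log b - η * ∑ t ∈ Finset.Icc 1 T, (∑ i, p i * ℓ t i)
      ≤ ∑ t ∈ Finset.Icc 1 T, Real.log (Z t) := by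
    have hw : ∀ i, p i * (-Real.log b - η * ∑ t ∈ Finset.Icc 1 T, ℓ t i)
        ≤ p i * (∑ t ∈ Finset.Icc 1 T, Real.log (Z t)) :=
      fun i => mul_le_mul_of_nonneg_left (claim4 i) (hp0 i)
    have hsum : ∑ i, p i * (-Real.log b - η * ∑ t ∈ Finset.Icc 1 T, ℓ t i)
        ≤ ∑ i, p i * (∑ t ∈ Finset.Icc 1 T, Real.log (Z t)) :=
      Finset.sum_le_sum (fun i _ => hw i)
    have hswap : ∑ i, p i * (∑ t ∈ Finset.Icc 1 T, ℓ t i)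
        = ∑ t ∈ Finset.Icc 1 T, (∑ i, p i * ℓ t i) := by
      simp only [Finset.mul_sum]
      exact Finset.sum_comm
    have hL : ∑ i, p i * (-Real.log b - η * ∑ t ∈ Finset.Icc 1 T, ℓ t i)
        = -Real.log b - η * ∑ t ∈ Finset.Icc 1 T, (∑ i, p i * ℓ t i) := by
      calc ∑ i, p i * (-Real.log b - η * ∑ t ∈ Finset.Icc 1 T, ℓ t i)
          = ∑ i, ((-Real.log b) * p i
              - η * (p i * ∑ t ∈ Finset.Icc 1 T, ℓ t i)) := by
            apply Finset.sum_congr rfl; intro i _; ring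
        _ = (-Real.log b) * (∑ i, p i)
              - η * ∑ i, p i * (∑ t ∈ Finset.Icc 1 T, ℓ t i) := by
            rw [Finset.sum_sub_distrib, ← Finset.mul_sum, ← Finset.mul_sum]
        _ = _ := by rw [hp1, hswap]; ring
    have hR : ∑ i, p i * (∑ t ∈ Finset.Icc 1 T, Real.log (Z t))
        = ∑ t ∈ Finset.Icc 1 T, Real.log (Z t) := by
      rw [← Finset.sum_mul, hp1, one_mul]
    rw [hL, hR] at hsum
    exact hsum
  have upper : ∑ t ∈ Finset.Icc 1 T, Real.log (Z t)
      ≤ -η * ∑ t ∈ Finset.Icc 1 T, (∑ i, φ t i * ℓ t i) + T * (η^2 * G^2 / 2) := by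
    calc ∑ t ∈ Finset.Icc 1 T, Real.log (Z t)
        ≤ ∑ t ∈ Finset.Icc 1 T, (-η * (∑ i, φ t i * ℓ t i) + η^2 * G^2 / 2) :=
          Finset.sum_le_sum claim3
      _ = _ := by
          rw [Finset.sum_add_distrib, ← Finset.mul_sum, Finset.sum_const,
              Nat.card_Icc]
          simp only [Nat.add_sub_cancel, nsmul_eq_mul]
  have hmain : η * ((∑ t ∈ Finset.Icc 1 T, (∑ i, φ t i * ℓ t i))
      - ∑ t ∈ Finset.Icc 1 T, (∑ i, p i * ℓ t i))
      ≤ Real.log b + T * (η^2 * G^2 / 2) := by nlinarith [hcomb.trans upper]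
  rw [Finset.sum_sub_distrib]
  rw [← sub_nonneg]
  have hfrac : Real.log b / η + T * (η * G^2 / 2)
      - ((∑ t ∈ Finset.Icc 1 T, (∑ i, φ t i * ℓ t i))
          - ∑ t ∈ Finset.Icc 1 T, (∑ i, p i * ℓ t i))
      = (Real.log b + T * (η^2 * G^2 / 2)
          - η * ((∑ t ∈ Finset.Icc 1 T, (∑ i, φ t i * ℓ t i))
              - ∑ t ∈ Finset.Icc 1 T, (∑ i, p i * ℓ t i))) / η := by
    field_simp
  rw [hfrac]
  apply div_nonneg _ hη.le
  linarith [hmain]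

theorem fgd_simplex {b : ℕ} (hb : 2 ≤ b) (T : ℕ) (φ : ℕ → Fin b → ℝ) (g : ℕ → Fin b → ℝ)
    (hg : ∀ t i, 0 < g t i)
    (hinit : ∀ i, φ 1 i = 1 / (b:ℝ))
    (hstep : ∀ t ∈ Finset.Icc 1 T, ∀ i : Fin b,
      φ (t+1) i = φ t i * g t i / ∑ j, φ t j * g t j) :
    ∀ t ∈ Finset.Icc 1 (T+1), (∀ i, 0 < φ t i) ∧ ∑ i, φ t i = 1 := by
  haveI : NeZero b := ⟨by omega⟩
  have hbpos : (0:ℝ) < b := by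
    have : (0:ℕ) < b := by omega
    exact_mod_cast this
  have key : ∀ n, n ≤ T → (∀ i, 0 < φ (n+1) i) ∧ ∑ i, φ (n+1) i = 1 := by
    intro n
    induction n with
    | zero =>
      intro _
      constructor
      · intro i; rw [hinit i]; positivity
      · simp only [hinit, Finset.sum_const, Finset.card_univ, Fintype.card_fin,
          nsmul_eq_mul]
        field_simp
    | succ n ih =>
      intro hn
      obtain ⟨hpos, hsum⟩ := ih (by omega)
      have hmem : n + 1 ∈ Finset.Icc 1 T := by simp only [Finset.mem_Icc]; omega
      have hZpos : 0 < ∑ j, φ (n+1) j * g (n+1) j :=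
        Finset.sum_pos (fun j _ => mul_pos (hpos j) (hg _ j)) Finset.univ_nonempty
      constructor
      · intro i
        rw [hstep (n+1) hmem i]
        exact div_pos (mul_pos (hpos i) (hg _ i)) hZpos
      · have : ∀ i ∈ (Finset.univ : Finset (Fin b)), φ (n+1+1) i
            = φ (n+1) i * g (n+1) i / ∑ j, φ (n+1) j * g (n+1) j :=
          fun i _ => hstep (n+1) hmem i
        rw [Finset.sum_congr rfl this, ← Finset.sum_div, div_self hZpos.ne']
  intro t ht
  simp only [Finset.mem_Icc] at ht
  obtain ⟨h1, h2⟩ := ht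
  obtain ⟨n, rfl⟩ : ∃ n, t = n + 1 := ⟨t - 1, by omega⟩
  exact key n (by omega)

theorem fgd_norm_add_sq {E : Type*} [NormedAddCommGroup E] (x y : E) :
    ‖x + y‖^2 ≤ 2*‖x‖^2 + 2*‖y‖^2 := by
  have h1 : ‖x + y‖ ≤ ‖x‖ + ‖y‖ := norm_add_le x y
  have h2 : ‖x + y‖^2 ≤ (‖x‖ + ‖y‖)^2 := by
    apply pow_le_pow_left₀ (norm_nonneg _) h1
  nlinarith [sq_nonneg (‖x‖ - ‖y‖)]

set_option maxHeartbeats 1000000 in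
theorem future_gradient_descent_regret
    {E : Type*} [NormedAddCommGroup E] [InnerProductSpace ℝ E] [CompleteSpace E]
    (r : ℤ → E → ℝ) (hrdiff : ∀ t : ℤ, Differentiable ℝ (r t))
    (hr0 : ∀ s : ℤ, s ≤ 0 → r s = 0)
    (M : ℝ) (hM : 0 < M)
    (hgrad : ∀ (t : ℤ) (x : E), ‖gradient (r t) x‖ ≤ M)
    (b w T : ℕ) (hb : 2 ≤ b) (hw : 1 ≤ w) (hT : 1 ≤ T)
    (δ : ℝ) (hδ : 0 ≤ δ) (c : ℝ) (hc : 0 < c)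
    (η : ℝ) (hη : η = c * Real.sqrt (Real.log b / (T * M ^ 4)))
    -- the linear gradient generator, its smoothed version, and the smoothed loss
    (m : (Fin b → ℝ) → ℕ → E → E)
    (hm : ∀ (a : Fin b → ℝ) (t : ℕ) (x : E),
      m a t x = ∑ i : Fin b, a i • gradient (r ((t : ℤ) - ((i : ℕ) + 1))) x)
    (mbar : (Fin b → ℝ) → ℕ → E → E)
    (hmbar : ∀ (a : Fin b → ℝ) (t : ℕ) (x : E),
      mbar a t x = (1 / (w : ℝ)) •
        (m a t x + ∑ i ∈ Finset.Icc 1 (w - 1), gradient (r ((t : ℤ) - i)) x))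
    (u : ℕ → E → ℝ)
    (hu : ∀ (t : ℕ) (x : E),
      u t x = (1 / (w : ℝ)) * ∑ i ∈ Finset.range w, r ((t : ℤ) - i) x)
    -- the recommendation-model iterates and the squared forecast error functions
    (θ : ℕ → E)
    (h : ℕ → (Fin b → ℝ) → ℝ)
    (hh : ∀ (t : ℕ) (a : Fin b → ℝ),
      h t a = ‖∑ j : Fin b,
        a j • (gradient (r t) (θ t)
                - gradient (r ((t : ℤ) - ((j : ℕ) + 1))) (θ t))‖ ^ 2)
    -- exponentiated-gradient updates of the mixture weights
    (φ : ℕ → Fin b → ℝ)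
    (hinit : ∀ i, φ 1 i = 1 / (b : ℝ))
    (hstep : ∀ t ∈ Finset.Icc 1 T, ∀ i : Fin b,
      φ (t + 1) i
        = φ t i * Real.exp (-η * fderiv ℝ (h t) (φ t) (Pi.single i 1))
            / ∑ j, φ t j * Real.exp (-η * fderiv ℝ (h t) (φ t) (Pi.single j 1)))
    -- termination condition of the inner gradient-descent loop
    (hterm : ∀ t ∈ Finset.Icc 1 T, ‖mbar (φ t) t (θ t)‖ ≤ δ)
    -- the comparator: a fixed mixture with forecast error bounded by Q
    (φstar : Fin b → ℝ) (hφstar_nonneg : ∀ i, 0 ≤ φstar i)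
    (hφstar_sum : (∑ i, φstar i) = 1)
    (Q : ℕ → ℝ)
    (hQnonneg : ∀ t ∈ Finset.Icc 1 T, 0 ≤ Q t)
    (hQ : ∀ t ∈ Finset.Icc 1 T, ∀ x : E,
      ‖gradient (r t) x - m φstar t x‖ ^ 2 ≤ Q t) :
    (1 / (T : ℝ)) * ∑ t ∈ Finset.Icc 1 T, ‖gradient (u t) (θ t)‖ ^ 2
      ≤ 2 * δ ^ 2
        + (2 / ((w : ℝ) ^ 2 * T)) *
            ((∑ t ∈ Finset.Icc 1 T, Q t)
              + (1 / c + 32 * c) * M ^ 2 * Real.sqrt (T * Real.log b)) := by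
  haveI : NeZero b := ⟨by omega⟩
  have hTpos : (0:ℝ) < T := by exact_mod_cast Nat.lt_of_lt_of_le Nat.zero_lt_one hT
  have hwpos : (0:ℝ) < w := by exact_mod_cast Nat.lt_of_lt_of_le Nat.zero_lt_one hw
  have hlogb : 0 < Real.log b := Real.log_pos (by exact_mod_cast hb.trans_lt' one_lt_two)
  have hηpos : 0 < η := by
    rw [hη]
    exact mul_pos hc (Real.sqrt_pos.mpr (div_pos hlogb (by positivity)))
  -- the forecast-error vectors
  set v : ℕ → Fin b → E :=
    fun t j => gradient (r t) (θ t) - gradient (r ((t : ℤ) - ((j : ℕ) + 1))) (θ t) with hv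
  -- the linear map a ↦ ∑ j a j • v t j
  set L : ℕ → (Fin b → ℝ) →L[ℝ] E :=
    fun t => ∑ j, (ContinuousLinearMap.proj j).smulRight (v t j) with hL
  have hLapp : ∀ t a, L t a = ∑ j, a j • v t j := by
    intro t a
    simp [hL, ContinuousLinearMap.sum_apply, ContinuousLinearMap.smulRight_apply,
      ContinuousLinearMap.proj_apply]
  have hht : ∀ t, h t = fun a => (inner ℝ (L t a) (L t a) : ℝ) := by
    intro t; funext a
    rw [hh t a, real_inner_self_eq_norm_sq, hLapp]
  have hL1 : ∀ t i, L t (Pi.single i 1) = v t i := by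
    intro t i
    rw [hLapp]
    rw [Finset.sum_eq_single i (fun j _ hj => by simp [Pi.single_apply, hj])
      (by simp)]
    simp
  -- the meta loss gradients
  set ℓ : ℕ → Fin b → ℝ := fun t i => fderiv ℝ (h t) (φ t) (Pi.single i 1) with hℓdef
  have hfderiv : ∀ t, fderiv ℝ (h t) (φ t)
      = (fderivInnerCLM ℝ (L t (φ t), L t (φ t))).comp ((L t).prod (L t)) := by
    intro t
    have hd := ((L t).hasFDerivAt (x := φ t)).inner ℝ ((L t).hasFDerivAt (x := φ t))
    rw [hht t]
    exact hd.fderiv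
  have hℓval : ∀ t i, ℓ t i = 2 * (inner ℝ (L t (φ t)) (v t i) : ℝ) := by
    intro t i
    rw [hℓdef]
    simp only
    rw [hfderiv t]
    rw [ContinuousLinearMap.comp_apply, ContinuousLinearMap.prod_apply,
      fderivInnerCLM_apply, hL1]
    rw [real_inner_comm (v t i)]
    ring
  have hstep' : ∀ t ∈ Finset.Icc 1 T, ∀ i : Fin b,
      φ (t+1) i = φ t i * Real.exp (-η * ℓ t i)
        / ∑ j, φ t j * Real.exp (-η * ℓ t j) := by
    simp only [hℓdef]
    exact hstep
  have hsimp := fgd_simplex hb T φ (fun t i => Real.exp (-η * ℓ t i))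
    (fun t i => Real.exp_pos _) hinit hstep'
  -- norm bounds
  have hvnorm : ∀ t i, ‖v t i‖ ≤ 2 * M := by
    intro t i
    rw [hv]
    calc ‖gradient (r t) (θ t) - gradient (r ((t : ℤ) - ((i : ℕ) + 1))) (θ t)‖
        ≤ ‖gradient (r t) (θ t)‖ + ‖gradient (r ((t : ℤ) - ((i : ℕ) + 1))) (θ t)‖ :=
          norm_sub_le _ _
      _ ≤ 2 * M := by have := hgrad t (θ t); have := hgrad ((t : ℤ) - ((i : ℕ) + 1)) (θ t); linarith
  have hLφ : ∀ t ∈ Finset.Icc 1 T, ‖L t (φ t)‖ ≤ 2 * M := by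
    intro t ht
    have ht' : t ∈ Finset.Icc 1 (T+1) := by
      simp only [Finset.mem_Icc] at ht ⊢; omega
    obtain ⟨hpos, hsum⟩ := hsimp t ht'
    rw [hLapp]
    calc ‖∑ j, φ t j • v t j‖ ≤ ∑ j, ‖φ t j • v t j‖ := norm_sum_le _ _
      _ ≤ ∑ j, φ t j * (2 * M) := by
          apply Finset.sum_le_sum; intro j _
          rw [norm_smul, Real.norm_eq_abs, abs_of_pos (hpos j)]
          exact mul_le_mul_of_nonneg_left (hvnorm t j) (hpos j).le
      _ = 2 * M := by rw [← Finset.sum_mul, hsum, one_mul]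
  have hℓbound : ∀ t ∈ Finset.Icc 1 T, ∀ i, |ℓ t i| ≤ 8 * M^2 := by
    intro t ht i
    rw [hℓval]
    rw [abs_mul, abs_two]
    have h1 : |(inner ℝ (L t (φ t)) (v t i) : ℝ)| ≤ ‖L t (φ t)‖ * ‖v t i‖ :=
      abs_real_inner_le_norm _ _
    have h2 := hLφ t ht
    have h3 := hvnorm t i
    have h4 : ‖L t (φ t)‖ * ‖v t i‖ ≤ (2*M) * (2*M) := by
      apply mul_le_mul h2 h3 (norm_nonneg _) (by linarith)
    nlinarith
  -- the hedge regret bound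
  have hedge := fgd_hedge hb T φ ℓ hsimp (8 * M^2) (by positivity) hℓbound η hηpos
    hinit hstep' φstar hφstar_nonneg hφstar_sum
  -- convexity of h t
  have hconv : ∀ t ∈ Finset.Icc 1 T, h t (φ t) - h t φstar
      ≤ (∑ i, φ t i * ℓ t i) - ∑ i, φstar i * ℓ t i := by
    intro t ht
    have hxy : L t (φ t) - L t φstar = ∑ i, (φ t i - φstar i) • v t i := by
      rw [← map_sub, hLapp]
      apply Finset.sum_congr rfl
      intro i _
      simp [Pi.sub_apply]
    have hid : (∑ i, φ t i * ℓ t i) - (∑ i, φstar i * ℓ t i)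
        = 2 * (inner ℝ (L t (φ t)) (L t (φ t) - L t φstar) : ℝ) := by
      rw [← Finset.sum_sub_distrib]
      rw [Finset.sum_congr rfl (fun i _ => by rw [hℓval] ; ring :
        ∀ i ∈ Finset.univ, φ t i * ℓ t i - φstar i * ℓ t i
          = 2 * ((φ t i - φstar i) * (inner ℝ (L t (φ t)) (v t i) : ℝ)))]
      rw [hxy, inner_sum]
      simp only [real_inner_smul_right]
      rw [Finset.mul_sum]
    rw [hid, hht t]
    simp only
    have e1 := real_inner_self_eq_norm_sq (L t (φ t))
    have e2 := real_inner_self_eq_norm_sq (L t φstar)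
    have e3 := norm_sub_sq_real (L t (φ t)) (L t φstar)
    rw [inner_sub_right]
    nlinarith [sq_nonneg (‖L t (φ t) - L t φstar‖)]
  -- h t φstar ≤ Q t
  have hstar : ∀ t ∈ Finset.Icc 1 T, h t φstar ≤ Q t := by
    intro t ht
    have hidm : ∑ j : Fin b, φstar j • (gradient (r t) (θ t)
        - gradient (r ((t : ℤ) - ((j : ℕ) + 1))) (θ t))
        = gradient (r t) (θ t) - m φstar t (θ t) := by
      rw [hm]
      simp only [smul_sub]
      rw [Finset.sum_sub_distrib, ← Finset.sum_smul, hφstar_sum, one_smul]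
    rw [hh, hidm]
    exact hQ t ht (θ t)
  -- h t (φ t) as forecast error
  have hhval : ∀ t ∈ Finset.Icc 1 T, h t (φ t)
      = ‖gradient (r t) (θ t) - m (φ t) t (θ t)‖^2 := by
    intro t ht
    have ht' : t ∈ Finset.Icc 1 (T+1) := by
      simp only [Finset.mem_Icc] at ht ⊢; omega
    obtain ⟨hpos, hsum⟩ := hsimp t ht'
    have hidm : ∑ j : Fin b, φ t j • (gradient (r t) (θ t)
        - gradient (r ((t : ℤ) - ((j : ℕ) + 1))) (θ t))
        = gradient (r t) (θ t) - m (φ t) t (θ t) := by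
      rw [hm]
      simp only [smul_sub]
      rw [Finset.sum_sub_distrib, ← Finset.sum_smul, hsum, one_smul]
    rw [hh, hidm]
  -- gradient of the smoothed loss
  have hugrad : ∀ t : ℕ, gradient (u t) (θ t)
      = (1/(w:ℝ)) • ∑ i ∈ Finset.range w, gradient (r ((t:ℤ) - i)) (θ t) := by
    intro t
    have hsum : HasFDerivAt (fun y => ∑ i ∈ Finset.range w, r ((t:ℤ) - i) y)
        (∑ i ∈ Finset.range w,
          (InnerProductSpace.toDual ℝ E (gradient (r ((t:ℤ)-i)) (θ t)) : E →L[ℝ] ℝ))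
        (θ t) :=
      HasFDerivAt.fun_sum (fun i _ => ((hrdiff _ (θ t)).hasGradientAt).hasFDerivAt)
    have hF := hsum.const_mul (1/(w:ℝ))
    have hfun : u t = fun y => (1/(w:ℝ)) * ∑ i ∈ Finset.range w, r ((t:ℤ)-i) y :=
      funext (hu t)
    rw [← hfun] at hF
    have h2 := (hasFDerivAt_iff_hasGradientAt.mp hF).gradient
    rw [h2, map_smul, map_sum]
    congr 1
    apply Finset.sum_congr rfl
    intro i _
    exact LinearIsometryEquiv.symm_apply_apply _ _
  -- decomposition of the smoothed gradient
  have hdecomp : ∀ t : ℕ, gradient (u t) (θ t)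
      = mbar (φ t) t (θ t)
        + (1/(w:ℝ)) • (gradient (r t) (θ t) - m (φ t) t (θ t)) := by
    intro t
    rw [hugrad, hmbar]
    have hIccIco : Finset.Icc 1 (w-1) = Finset.Ico 1 w := by
      rw [← Finset.Ico_add_one_right_eq_Icc]
      congr 1
      omega
    have hsplit : ∑ i ∈ Finset.range w, gradient (r ((t:ℤ) - i)) (θ t)
        = gradient (r t) (θ t)
          + ∑ i ∈ Finset.Icc 1 (w-1), gradient (r ((t:ℤ) - i)) (θ t) := by
      rw [hIccIco, Finset.range_eq_Ico,
        Finset.sum_eq_sum_Ico_succ_bot (by omega : 0 < w)]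
      norm_num
    rw [hsplit, ← smul_add]
    congr 1
    abel
  -- pointwise regret bound
  have hpoint : ∀ t ∈ Finset.Icc 1 T, ‖gradient (u t) (θ t)‖^2
      ≤ 2 * δ^2 + (2/(w:ℝ)^2) * h t (φ t) := by
    intro t ht
    rw [hdecomp t]
    set A := mbar (φ t) t (θ t) with hA
    set D := (1/(w:ℝ)) • (gradient (r t) (θ t) - m (φ t) t (θ t)) with hD
    have h1 : ‖A‖ ≤ δ := hterm t ht
    have h2 : ‖D‖^2 = (1/(w:ℝ)^2) * h t (φ t) := by
      rw [hD, norm_smul, hhval t ht, mul_pow, Real.norm_eq_abs,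
        abs_of_pos (by positivity : (0:ℝ) < 1/(w:ℝ))]
      congr 1
      rw [div_pow, one_pow]
    have h3 : ‖A + D‖^2 ≤ 2*‖A‖^2 + 2*‖D‖^2 := fgd_norm_add_sq A D
    have h4 : ‖A‖^2 ≤ δ^2 := pow_le_pow_left₀ (norm_nonneg _) h1 2
    calc ‖A + D‖^2 ≤ 2*‖A‖^2 + 2*‖D‖^2 := h3
      _ ≤ 2*δ^2 + 2*((1/(w:ℝ)^2) * h t (φ t)) := by rw [← h2]; linarith
      _ = 2 * δ^2 + (2/(w:ℝ)^2) * h t (φ t) := by ring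
  -- summing up
  have hsum2 : ∑ t ∈ Finset.Icc 1 T, h t (φ t)
      ≤ (∑ t ∈ Finset.Icc 1 T, Q t)
        + (Real.log b / η + T * (η * (8*M^2)^2 / 2)) := by
    have step1 : ∑ t ∈ Finset.Icc 1 T, h t (φ t)
        ≤ ∑ t ∈ Finset.Icc 1 T, (h t φstar
            + ((∑ i, φ t i * ℓ t i) - ∑ i, φstar i * ℓ t i)) := by
      apply Finset.sum_le_sum
      intro t ht
      have := hconv t ht
      linarith
    rw [Finset.sum_add_distrib] at step1
    have step2 : ∑ t ∈ Finset.Icc 1 T, h t φstar ≤ ∑ t ∈ Finset.Icc 1 T, Q t :=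
      Finset.sum_le_sum hstar
    linarith [hedge]
  -- arithmetic with η
  have harith : Real.log b / η + T * (η * (8*M^2)^2 / 2)
      = (1/c + 32*c) * M^2 * Real.sqrt (T * Real.log b) := by
    set R := Real.sqrt ((T:ℝ) * Real.log b) with hR
    have hR2 : R^2 = (T:ℝ) * Real.log b := Real.sq_sqrt (by positivity)
    have hRpos : 0 < R := Real.sqrt_pos.mpr (by positivity)
    have hs : Real.sqrt (Real.log b / ((T:ℝ) * M^4)) = R / ((T:ℝ) * M^2) := by
      rw [show Real.log b / ((T:ℝ) * M^4) = (R/((T:ℝ)*M^2))^2 by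
        rw [div_pow, hR2]; field_simp]
      exact Real.sqrt_sq (by positivity)
    rw [hη, hs]
    have hM2 : (0:ℝ) < M^2 := by positivity
    field_simp
    linear_combination (-2) * hR2
  -- final assembly
  have hfinal : ∑ t ∈ Finset.Icc 1 T, ‖gradient (u t) (θ t)‖^2
      ≤ 2*δ^2*T + (2/(w:ℝ)^2) * ((∑ t ∈ Finset.Icc 1 T, Q t)
          + (1/c + 32*c) * M^2 * Real.sqrt (T * Real.log b)) := by
    calc ∑ t ∈ Finset.Icc 1 T, ‖gradient (u t) (θ t)‖^2
        ≤ ∑ t ∈ Finset.Icc 1 T, (2 * δ^2 + (2/(w:ℝ)^2) * h t (φ t)) :=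
          Finset.sum_le_sum hpoint
      _ = 2*δ^2*T + (2/(w:ℝ)^2) * ∑ t ∈ Finset.Icc 1 T, h t (φ t) := by
          rw [Finset.sum_add_distrib, Finset.sum_const, Nat.card_Icc,
            ← Finset.mul_sum]
          simp only [Nat.add_sub_cancel, nsmul_eq_mul]
          ring
      _ ≤ 2*δ^2*T + (2/(w:ℝ)^2) * ((∑ t ∈ Finset.Icc 1 T, Q t)
            + (1/c + 32*c) * M^2 * Real.sqrt (T * Real.log b)) := by
          rw [← harith]
          have hw2 : (0:ℝ) ≤ 2/(w:ℝ)^2 := by positivity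
          nlinarith [mul_le_mul_of_nonneg_left hsum2 hw2]
  have hgoal : 2 * δ ^ 2 + (2 / ((w : ℝ) ^ 2 * T)) *
      ((∑ t ∈ Finset.Icc 1 T, Q t)
        + (1 / c + 32 * c) * M ^ 2 * Real.sqrt (T * Real.log b))
      = (1/(T:ℝ)) * (2*δ^2*T + (2/(w:ℝ)^2) * ((∑ t ∈ Finset.Icc 1 T, Q t)
          + (1/c + 32*c) * M^2 * Real.sqrt (T * Real.log b))) := by
    field_simp
  rw [hgoal]
  exact mul_le_mul_of_nonneg_left hfinal (by positivity)
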